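/- Suppose power series A(x), B(x) over a commutative ℚ-algebra satisfy A(x) = x·B(A(x)) with B(0) invertible. If B(x) = x·F(x) with F(ρ) = ∑_{j≥0} c_j ρ^{j−1} a formal Laurent series with c_0 ≠ 0, i.e. A(x) = x·A(x)·F(A(x)), then for n > 1 the coefficients are [x^n]A(x) = ∑_{j=1}^{n−1} (c_0^{n−j}/(n−j)!) · B_{n−1,j}(1!c_1, 2!c_2, 3!c_3, …), where B_{n,j} denotes the partial Bell polynomials, and [x¹]A(x) = c_0. -/

import Mathlib

open PowerSeries

open Finset

section AuxLagrange

variable {K : Type*} [CommRing K]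

lemma aux_coeff_pow_eq_zero {A : PowerSeries K} (hA0 : PowerSeries.coeff (R := K) 0 A = 0)
    {n j : ℕ} (h : n < j) : PowerSeries.coeff (R := K) n (A ^ j) = 0 := by
  have hX : (X : K⟦X⟧) ∣ A := X_dvd_iff.mpr (by simpa using hA0)
  have : (X : K⟦X⟧) ^ j ∣ A ^ j := pow_dvd_pow_of_dvd hX j
  exact X_pow_dvd_iff.mp this n h

lemma aux_coeff_pow_congr {F G : PowerSeries K} {M : ℕ}
    (h : ∀ i < M, PowerSeries.coeff (R := K) i F = PowerSeries.coeff (R := K) i G) (k : ℕ) :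
    ∀ j < M, PowerSeries.coeff (R := K) j (F ^ k) = PowerSeries.coeff (R := K) j (G ^ k) := by
  have h1 : (X : K⟦X⟧) ^ M ∣ F - G :=
    X_pow_dvd_iff.mpr (fun m hm => by simp [h m hm])
  have h2 : (X : K⟦X⟧) ^ M ∣ F ^ k - G ^ k :=
    h1.trans (sub_dvd_pow_sub_pow F G k)
  intro j hj
  have := X_pow_dvd_iff.mp h2 j hj
  rw [map_sub, sub_eq_zero] at this
  exact this

lemma aux_coeff_eval₂ {A : PowerSeries K} (hA0 : PowerSeries.coeff (R := K) 0 A = 0)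
    (P : Polynomial K) (n : ℕ) :
    PowerSeries.coeff (R := K) n (P.eval₂ (PowerSeries.C (R := K)) A) =
      ∑ j ∈ range (n + 1), P.coeff j * PowerSeries.coeff (R := K) n (A ^ j) := by
  induction P using Polynomial.induction_on' with
  | add p q hp hq => simp [hp, hq, add_mul, Finset.sum_add_distrib]
  | monomial d a =>
    rw [Polynomial.eval₂_monomial]
    simp only [Polynomial.coeff_monomial, coeff_C_mul, ite_mul, zero_mul]
    rw [Finset.sum_ite_eq (range (n + 1)) d]
    by_cases hd : d ∈ range (n + 1)
    · simp [hd]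
    · simp only [hd, if_false]
      rw [aux_coeff_pow_eq_zero hA0 (by simpa using hd), mul_zero]

lemma aux_coeff_G_pow {A : PowerSeries K} (hA0 : PowerSeries.coeff (R := K) 0 A = 0)
    (c : ℕ → K) (m k : ℕ) :
    PowerSeries.coeff (R := K) m ((PowerSeries.mk fun n => ∑ j ∈ range (n + 1),
        c j * PowerSeries.coeff (R := K) n (A ^ j)) ^ k) =
      ∑ j ∈ range (m + 1),
        PowerSeries.coeff (R := K) j ((PowerSeries.mk c) ^ k) * PowerSeries.coeff (R := K) m (A ^ j) := by
  set G : K⟦X⟧ := PowerSeries.mk fun n => ∑ j ∈ range (n + 1),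
    c j * PowerSeries.coeff (R := K) n (A ^ j) with hG
  set H : K⟦X⟧ := PowerSeries.mk c with hH
  set P : Polynomial K := trunc (m + 1) H with hP
  have hPc : ∀ i < m + 1, P.coeff i = c i := by
    intro i hi
    rw [hP, coeff_trunc, if_pos hi, hH, coeff_mk]
  have h1 : ∀ i < m + 1, PowerSeries.coeff (R := K) i G =
      PowerSeries.coeff (R := K) i (P.eval₂ (PowerSeries.C (R := K)) A) := by
    intro i hi
    rw [aux_coeff_eval₂ hA0, hG, coeff_mk]
    refine Finset.sum_congr rfl fun j hj => ?_
    rw [hPc j (lt_of_lt_of_le (mem_range.mp hj) hi)]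
  have h2 : ∀ i < m + 1, PowerSeries.coeff (R := K) i H =
      PowerSeries.coeff (R := K) i (P : K⟦X⟧) := by
    intro i hi
    rw [Polynomial.coeff_coe, hPc i hi, hH, coeff_mk]
  rw [aux_coeff_pow_congr h1 k m (Nat.lt_succ_self m),
    ← Polynomial.eval₂_pow, aux_coeff_eval₂ hA0]
  refine Finset.sum_congr rfl fun j hj => ?_
  congr 1
  rw [aux_coeff_pow_congr h2 k j (mem_range.mp hj), ← Polynomial.coe_pow,
    Polynomial.coeff_coe]

lemma aux_cancel {K : Type*} [CommRing K] [Algebra ℚ K] {m : ℕ} (hm : m ≠ 0) {x y : K}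
    (h : (m : K) * x = (m : K) * y) : x = y := by
  have hmx : ∀ z : K, (m : K) * z = (m : ℚ) • z := by
    intro z
    rw [Algebra.smul_def, map_natCast]
  rw [hmx, hmx] at h
  have hm' : (m : ℚ) ≠ 0 := Nat.cast_ne_zero.mpr hm
  calc x = (m : ℚ)⁻¹ • ((m : ℚ) • x) := (inv_smul_smul₀ hm' x).symm
    _ = (m : ℚ)⁻¹ • ((m : ℚ) • y) := by rw [h]
    _ = y := inv_smul_smul₀ hm' y

lemma aux_key {K : Type*} [CommRing K] [Algebra ℚ K] (c : ℕ → K) (A : PowerSeries K)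
    (hA0 : PowerSeries.coeff (R := K) 0 A = 0)
    (hEq : A = PowerSeries.X *
      PowerSeries.mk fun n => ∑ j ∈ Finset.range (n + 1),
        c j * PowerSeries.coeff (R := K) n (A ^ j)) :
    ∀ n : ℕ, 1 ≤ n → ∀ k : ℕ, 1 ≤ k → k ≤ n →
      (n : K) * PowerSeries.coeff (R := K) n (A ^ k) =
        (k : K) * PowerSeries.coeff (R := K) (n - k) ((PowerSeries.mk c) ^ n) := by
  set H : K⟦X⟧ := PowerSeries.mk c with hH
  have brec : ∀ n k : ℕ, k ≤ n → PowerSeries.coeff (R := K) n (A ^ k) =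
      ∑ j ∈ range (n - k + 1),
        PowerSeries.coeff (R := K) j (H ^ k) * PowerSeries.coeff (R := K) (n - k) (A ^ j) := by
    intro n k hkn
    conv_lhs => rw [hEq]
    rw [mul_pow, coeff_X_pow_mul', if_pos hkn, aux_coeff_G_pow hA0]
  intro n
  induction n using Nat.strong_induction_on with
  | _ n IH =>
    intro hn k hk hkn
    rcases eq_or_lt_of_le hkn with rfl | hkn'
    · rw [brec _ _ le_rfl]
      simp [Nat.sub_self]
    · set m : ℕ := n - k with hm
      have hm1 : 1 ≤ m := by omega
      have hmn : m < n := by omega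
      have hm0 : (m : ℕ) ≠ 0 := by omega
      rw [brec n k hkn]
      rw [Finset.sum_range_succ']
      have hz : PowerSeries.coeff (R := K) m (A ^ 0) = 0 := by
        rw [pow_zero, PowerSeries.coeff_one, if_neg (by omega)]
      rw [hz, mul_zero, add_zero]
      apply aux_cancel hm0
      have hd : ∀ i ∈ range m, (m : K) * (PowerSeries.coeff (R := K) (i + 1) (H ^ k) *
          PowerSeries.coeff (R := K) m (A ^ (i + 1))) =
          PowerSeries.coeff (R := K) (i + 1) (H ^ k) *
            ((i + 1 : ℕ) * PowerSeries.coeff (R := K) (m - (i + 1)) (H ^ m)) := by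
        intro i hi
        have hi' : i < m := mem_range.mp hi
        have := IH m hmn hm1 (i + 1) (by omega) (by omega)
        rw [mul_left_comm, this]
      rw [mul_left_comm, Finset.mul_sum, Finset.sum_congr rfl hd]
      have hder : ∑ i ∈ range m, PowerSeries.coeff (R := K) (i + 1) (H ^ k) *
          ((i + 1 : ℕ) * PowerSeries.coeff (R := K) (m - (i + 1)) (H ^ m)) =
          PowerSeries.coeff (R := K) (m - 1) ((d⁄dX K) (H ^ k) * H ^ m) := by
        rw [PowerSeries.coeff_mul, Finset.Nat.sum_antidiagonal_eq_sum_range_succ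
          (f := fun a b => PowerSeries.coeff (R := K) a ((d⁄dX K) (H ^ k)) *
            PowerSeries.coeff (R := K) b (H ^ m)), Nat.succ_eq_add_one,
          (show m - 1 + 1 = m by omega)]
        refine Finset.sum_congr rfl fun i hi => ?_
        rw [PowerSeries.coeff_derivative, (show m - 1 - i = m - (i + 1) by omega)]
        push_cast
        ring
      rw [hder]
      have hpow : (d⁄dX K) (H ^ k) * H ^ m = (k : ℕ) • (H ^ (n - 1) * (d⁄dX K) H) := by
        rw [Derivation.leibniz_pow, smul_mul_assoc]
        congr 1
        rw [smul_eq_mul, mul_right_comm, ← pow_add, (show k - 1 + m = n - 1 by omega)]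
      have hpow' : (d⁄dX K) (H ^ n) = (n : ℕ) • (H ^ (n - 1) * (d⁄dX K) H) := by
        rw [Derivation.leibniz_pow, smul_eq_mul]
      have key2 : (m : K) * PowerSeries.coeff (R := K) m (H ^ n) =
          (n : K) * PowerSeries.coeff (R := K) (m - 1) (H ^ (n - 1) * (d⁄dX K) H) := by
        have h3 : PowerSeries.coeff (R := K) (m - 1) ((d⁄dX K) (H ^ n)) =
            PowerSeries.coeff (R := K) (m - 1 + 1) (H ^ n) * (m - 1 + 1 : ℕ) := by
          rw [PowerSeries.coeff_derivative]; push_cast; ring_nf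
        rw [hpow', map_nsmul, nsmul_eq_mul, (show m - 1 + 1 = m by omega)] at h3
        push_cast at h3
        linear_combination -h3
      rw [hpow, map_nsmul, nsmul_eq_mul]
      linear_combination (-(k : K)) * key2

end AuxLagrange

/-- The value `B_{n,j}(1!c_1, 2!c_2, …)` of the partial Bell polynomial, defined by the
generating identity `(1/j!) (∑_{m>0} c_m t^m)^j = ∑_{n≥j} B_{n,j}(1!c_1, …) t^n/n!`. -/
noncomputable def bellValue {K : Type*} [CommRing K] [Algebra ℚ K] (c : ℕ → K)
    (n j : ℕ) : K :=
  (n.factorial : ℚ) •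
    ((j.factorial : ℚ)⁻¹ •
      PowerSeries.coeff (R := K) n ((PowerSeries.mk fun m => if m = 0 then 0 else c m) ^ j))

/-- Lagrange inversion for the linear Dyson–Schwinger equation: if `A(x) = x·A(x)·F(A(x))`
with `F(ρ) = ∑_{j≥0} c_j ρ^{j-1}` and `c_0` invertible (here `A·F(A) = ∑_j c_j A^j`), then
`[x¹]A = c_0` and for `n > 1`,
`[x^n]A = ∑_{j=1}^{n-1} (c_0^{n-j}/(n-j)!)·B_{n-1,j}(1!c_1, 2!c_2, …)`. -/
theorem lagrange_bell_coefficients {K : Type*} [CommRing K] [Algebra ℚ K]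
    (c : ℕ → K) (hc : IsUnit (c 0)) (A : PowerSeries K)
    (hA0 : PowerSeries.coeff (R := K) 0 A = 0)
    (hEq : A = PowerSeries.X *
      PowerSeries.mk fun n => ∑ j ∈ Finset.range (n + 1),
        c j * PowerSeries.coeff (R := K) n (A ^ j)) :
    PowerSeries.coeff (R := K) 1 A = c 0 ∧
    ∀ n : ℕ, 1 < n →
      PowerSeries.coeff (R := K) n A =
        ∑ j ∈ Finset.Icc 1 (n - 1),
          ((n - j).factorial : ℚ)⁻¹ • (c 0 ^ (n - j) * bellValue c (n - 1) j) := by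

  constructor
  · conv_lhs => rw [hEq]
    rw [show (1 : ℕ) = 0 + 1 from rfl, coeff_succ_X_mul, coeff_mk]
    simp
  · intro n hn
    set Hp : K⟦X⟧ := PowerSeries.mk fun m => if m = 0 then 0 else c m with hHp
    have hHp0 : PowerSeries.coeff (R := K) 0 Hp = 0 := by simp [hHp]
    have hsplit : (PowerSeries.mk c : K⟦X⟧) = PowerSeries.C (R := K) (c 0) + Hp := by
      ext i
      rcases eq_or_ne i 0 with rfl | hi
      · simp [hHp, PowerSeries.coeff_C]
      · simp [hHp, PowerSeries.coeff_C, hi]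
    have hA := aux_key c A hA0 hEq n (by omega) 1 le_rfl (by omega)
    rw [pow_one, Nat.cast_one, one_mul] at hA
    have hn0 : (n : ℚ) ≠ 0 := Nat.cast_ne_zero.mpr (by omega)
    have h1 : PowerSeries.coeff (R := K) n A =
        (n : ℚ)⁻¹ • PowerSeries.coeff (R := K) (n - 1) ((PowerSeries.mk c) ^ n) := by
      have : (n : K) * PowerSeries.coeff (R := K) n A = (n : ℚ) • PowerSeries.coeff (R := K) n A := by
        rw [Algebra.smul_def, map_natCast]
      rw [← hA, this, inv_smul_smul₀ hn0]
    rw [h1, hsplit, add_comm, add_pow, map_sum]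
    have hterm : ∀ k ∈ range (n + 1),
        PowerSeries.coeff (R := K) (n - 1) (Hp ^ k * (PowerSeries.C (R := K) (c 0)) ^ (n - k) *
          (n.choose k : K⟦X⟧)) =
        PowerSeries.coeff (R := K) (n - 1) (Hp ^ k) * (c 0 ^ (n - k) * (n.choose k : K)) := by
      intro k _
      rw [← map_pow, ← map_natCast (PowerSeries.C (R := K)) (n.choose k), mul_assoc, ← map_mul,
        coeff_mul_C]
    rw [Finset.sum_congr rfl hterm]
    have hrestrict : ∑ k ∈ range (n + 1),
        PowerSeries.coeff (R := K) (n - 1) (Hp ^ k) * (c 0 ^ (n - k) * (n.choose k : K)) =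
        ∑ k ∈ Finset.Icc 1 (n - 1),
          PowerSeries.coeff (R := K) (n - 1) (Hp ^ k) * (c 0 ^ (n - k) * (n.choose k : K)) := by
      refine (Finset.sum_subset ?_ ?_).symm
      · intro k hk
        rw [Finset.mem_Icc] at hk
        rw [mem_range]
        omega
      · intro k hk hk'
        rw [mem_range] at hk
        rw [Finset.mem_Icc] at hk'
        rcases Nat.eq_zero_or_pos k with rfl | hkpos
        · rw [pow_zero, PowerSeries.coeff_one, if_neg (by omega), zero_mul]
        · rw [aux_coeff_pow_eq_zero hHp0 (by omega : n - 1 < k), zero_mul]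
    rw [hrestrict, Finset.smul_sum]
    refine Finset.sum_congr rfl fun j hj => ?_
    rw [Finset.mem_Icc] at hj
    simp only [bellValue, ← hHp]
    have hch : ((n.choose j : K)) = (n.choose j : ℚ) • (1 : K) := by
      rw [Algebra.smul_def, mul_one, map_natCast]
    rw [hch]
    simp only [mul_smul_comm, smul_smul, mul_one]
    rw [mul_comm (PowerSeries.coeff (R := K) (n-1) (Hp ^ j)) (c 0 ^ (n - j))]
    congr 1
    rw [Nat.cast_choose ℚ (by omega : j ≤ n)]
    have hfac : (n.factorial : ℚ) = n * ((n - 1).factorial : ℚ) := by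
      rw [show n = (n - 1) + 1 by omega, Nat.factorial_succ]
      push_cast
      ring
    rw [hfac]
    have hj0 : ((j.factorial : ℚ)) ≠ 0 := Nat.cast_ne_zero.mpr (Nat.factorial_ne_zero j)
    have hnj0 : (((n - j).factorial : ℚ)) ≠ 0 := Nat.cast_ne_zero.mpr (Nat.factorial_ne_zero _)
    rw [mul_div_assoc, inv_mul_cancel_left₀ hn0, div_eq_mul_inv, mul_inv]
    ring
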